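/- Let F, G ∈ L¹([0,T]; L²(ℝ)) and f, g ∈ L²(ℝ). Let u, v solve (D_t + D_x)u = F, u(0) = f and (D_t − D_x)v = G, v(0) = g (Duhamel solutions). Then ‖uv‖_{L²([0,T]×ℝ)} ≤ C (‖f‖_{L²} + ∫₀^T ‖F(t)‖_{L²} dt)(‖g‖_{L²} + ∫₀^T ‖G(t)‖_{L²} dt) with an absolute constant C; the same bound holds with u replaced by its complex conjugate. -/

import Mathlib

open MeasureTheory ENNReal

lemma scale_lem (φ : ℝ → ℝ≥0∞) (hφ : Measurable φ) (c : ℝ) :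
    ∫⁻ t : ℝ, φ (c - 2*t) = 2⁻¹ * ∫⁻ y, φ y := by
  have h2 : (2:ℝ) ≠ 0 := two_ne_zero
  calc ∫⁻ t : ℝ, φ (c - 2*t)
      = ∫⁻ t : ℝ, (fun y => φ (c - y)) (2 * t) := by simp
    _ = ∫⁻ y, (fun y => φ (c - y)) y ∂(Measure.map (fun t => 2*t) volume) := by
        rw [lintegral_map' (by fun_prop) (by fun_prop)]
    _ = 2⁻¹ * ∫⁻ y, φ (c - y) := by
        rw [Real.map_volume_mul_left h2, lintegral_smul_measure]
        congr 1
        rw [show |(2:ℝ)⁻¹| = 2⁻¹ by norm_num, ENNReal.ofReal_inv_of_pos two_pos]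
        norm_num
    _ = 2⁻¹ * ∫⁻ y, φ y := by
        congr 1
        have h1 : ∀ y : ℝ, φ (c - y) = (fun z => φ (-z)) (y - c) := by intro y; simp [neg_sub]
        simp_rw [h1]
        rw [lintegral_sub_right_eq_self (fun z => φ (-z)) c]
        have h : ∫⁻ y, φ y ∂(Measure.map Neg.neg (volume : Measure ℝ)) = ∫⁻ x : ℝ, φ (-x) := lintegral_map' hφ.aemeasurable (measurable_neg : Measurable (Neg.neg : ℝ → ℝ)).aemeasurable
        rw [Measure.map_neg_eq_self (volume : Measure ℝ)] at h
        exact h.symm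

lemma free_lem (φ ψ : ℝ → ℝ≥0∞) (hφ : Measurable φ) (hψ : Measurable ψ) :
    ∫⁻ t : ℝ, ∫⁻ x : ℝ, φ (x - t) * ψ (x + t)
      = 2⁻¹ * ((∫⁻ y, φ y) * ∫⁻ y, ψ y) := by
  have step1 : ∀ t : ℝ, ∫⁻ x : ℝ, φ (x - t) * ψ (x + t)
      = ∫⁻ x : ℝ, φ (x - 2*t) * ψ x := by
    intro t
    have : ∀ x : ℝ, φ (x - t) * ψ (x + t) = (fun y => φ (y - 2*t) * ψ y) (x + t) := by
      intro x; simp only; ring_nf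
    simp_rw [this]
    exact lintegral_add_right_eq_self (fun y => φ (y - 2*t) * ψ y) t
  simp_rw [step1]
  rw [lintegral_lintegral_swap (by fun_prop)]
  have step2 : ∀ x : ℝ, ∫⁻ t : ℝ, φ (x - 2*t) * ψ x = (2⁻¹ * ∫⁻ y, φ y) * ψ x := by
    intro x
    rw [lintegral_mul_const _ (by fun_prop), scale_lem φ hφ x]
  simp_rw [step2]
  rw [lintegral_const_mul _ hψ]
  ring

lemma term_lem (T : ℝ) (φ ψ : ℝ → ℝ≥0∞) (hφ : Measurable φ) (hψ : Measurable ψ) (c d : ℝ) :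
    (∫⁻ t in Set.Icc (0:ℝ) T, ∫⁻ x : ℝ, φ (x - t + c) * ψ (x + t - d)) ^ (2⁻¹:ℝ)
      ≤ (∫⁻ y, φ y) ^ (2⁻¹:ℝ) * (∫⁻ y, ψ y) ^ (2⁻¹:ℝ) := by
  have hbase : (∫⁻ t in Set.Icc (0:ℝ) T, ∫⁻ x : ℝ, φ (x - t + c) * ψ (x + t - d))
      ≤ (∫⁻ y, φ y) * ∫⁻ y, ψ y := by
    have h1 : (∫⁻ t in Set.Icc (0:ℝ) T, ∫⁻ x : ℝ, φ (x - t + c) * ψ (x + t - d))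
        ≤ ∫⁻ t : ℝ, ∫⁻ x : ℝ, φ (x - t + c) * ψ (x + t - d) :=
      lintegral_mono' Measure.restrict_le_self le_rfl
    have h2 : ∫⁻ t : ℝ, ∫⁻ x : ℝ, φ (x - t + c) * ψ (x + t - d)
        = 2⁻¹ * ((∫⁻ y, φ (y + c)) * ∫⁻ y, ψ (y - d)) := by
      have : ∀ (t x : ℝ), φ (x - t + c) * ψ (x + t - d)
          = (fun y => φ (y + c)) (x - t) * (fun y => ψ (y - d)) (x + t) := fun t x => rfl
      simp_rw [this]
      exact free_lem (fun y => φ (y + c)) (fun y => ψ (y - d)) (by fun_prop) (by fun_prop)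
    rw [h2, lintegral_add_right_eq_self (fun y => φ y) c,
      lintegral_sub_right_eq_self (fun y => ψ y) d] at h1
    calc (∫⁻ t in Set.Icc (0:ℝ) T, ∫⁻ x : ℝ, φ (x - t + c) * ψ (x + t - d))
        ≤ 2⁻¹ * ((∫⁻ y, φ y) * ∫⁻ y, ψ y) := h1
      _ ≤ (∫⁻ y, φ y) * ∫⁻ y, ψ y := by
          exact mul_le_of_le_one_left zero_le (by norm_num)
  calc (∫⁻ t in Set.Icc (0:ℝ) T, ∫⁻ x : ℝ, φ (x - t + c) * ψ (x + t - d)) ^ (2⁻¹:ℝ)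
      ≤ ((∫⁻ y, φ y) * ∫⁻ y, ψ y) ^ (2⁻¹:ℝ) := ENNReal.rpow_le_rpow hbase (by norm_num)
    _ = (∫⁻ y, φ y) ^ (2⁻¹:ℝ) * (∫⁻ y, ψ y) ^ (2⁻¹:ℝ) :=
        ENNReal.mul_rpow_of_nonneg _ _ (by norm_num)

lemma sq_rpow (X : ℝ≥0∞) : X ^ (2:ℝ) = X * X := by
  rw [show (2:ℝ) = ((2:ℕ):ℝ) by norm_num, ENNReal.rpow_natCast]; ring

lemma mink_lem {α β : Type*} [MeasurableSpace α] [MeasurableSpace β]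
    (μ : Measure α) (ν : Measure β) [SFinite μ] [SFinite ν]
    (H : β → α → ℝ≥0∞) (hH : Measurable (Function.uncurry H)) :
    (∫⁻ x, (∫⁻ s, H s x ∂ν) ^ (2:ℝ) ∂μ) ^ (2⁻¹:ℝ)
      ≤ ∫⁻ s, (∫⁻ x, (H s x) ^ (2:ℝ) ∂μ) ^ (2⁻¹:ℝ) ∂ν := by
  set N : β → ℝ≥0∞ := fun s => (∫⁻ x, (H s x) ^ (2:ℝ) ∂μ) ^ (2⁻¹:ℝ) with hNdef
  have hHs : ∀ s, Measurable (fun x => H s x) := fun s =>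
    hH.comp (measurable_prodMk_left)
  have hN : Measurable N :=
    (Measurable.lintegral_prod_right (hH.pow_const _)).pow_const _
  have hK : Measurable (fun q : α × (β × β) => H q.2.1 q.1 * H q.2.2 q.1) :=
    (hH.comp ((measurable_snd.fst).prodMk measurable_fst)).mul
      (hH.comp ((measurable_snd.snd).prodMk measurable_fst))
  have expand : ∀ x, (∫⁻ s, H s x ∂ν) ^ (2:ℝ)
      = ∫⁻ p, H p.1 x * H p.2 x ∂(ν.prod ν) := by
    intro x
    rw [sq_rpow]
    exact (lintegral_prod_mul (f := fun s => H s x) (g := fun s => H s x)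
      (hH.comp (measurable_id.prodMk measurable_const)).aemeasurable
      (hH.comp (measurable_id.prodMk measurable_const)).aemeasurable).symm
  have swap : ∫⁻ x, (∫⁻ s, H s x ∂ν) ^ (2:ℝ) ∂μ
      = ∫⁻ p, (∫⁻ x, H p.1 x * H p.2 x ∂μ) ∂(ν.prod ν) := by
    simp_rw [expand]
    exact lintegral_lintegral_swap hK.aemeasurable
  have hconj : Real.HolderConjugate 2 2 := Real.HolderConjugate.two_two
  have CS : ∀ p : β × β, (∫⁻ x, H p.1 x * H p.2 x ∂μ) ≤ N p.1 * N p.2 := by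
    intro p
    have := ENNReal.lintegral_mul_le_Lp_mul_Lq μ hconj (hHs p.1).aemeasurable (hHs p.2).aemeasurable
    simpa [hNdef, one_div] using this
  have key : ∫⁻ x, (∫⁻ s, H s x ∂ν) ^ (2:ℝ) ∂μ ≤ (∫⁻ s, N s ∂ν) ^ (2:ℝ) := by
    rw [swap, sq_rpow, ← lintegral_prod_mul hN.aemeasurable hN.aemeasurable]
    exact lintegral_mono CS
  calc (∫⁻ x, (∫⁻ s, H s x ∂ν) ^ (2:ℝ) ∂μ) ^ (2⁻¹:ℝ)
      ≤ ((∫⁻ s, N s ∂ν) ^ (2:ℝ)) ^ (2⁻¹:ℝ) := ENNReal.rpow_le_rpow key (by norm_num)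
    _ = ∫⁻ s, N s ∂ν := by
        rw [← ENNReal.rpow_mul]; norm_num

lemma tri_lem {α : Type*} [MeasurableSpace α] (μ : Measure α) (p q : α → ℝ≥0∞)
    (hp : AEMeasurable p μ) (hq : AEMeasurable q μ) :
    (∫⁻ x, (p x + q x) ^ (2:ℝ) ∂μ) ^ (2⁻¹:ℝ)
      ≤ (∫⁻ x, p x ^ (2:ℝ) ∂μ) ^ (2⁻¹:ℝ) + (∫⁻ x, q x ^ (2:ℝ) ∂μ) ^ (2⁻¹:ℝ) := by
  simpa [one_div] using ENNReal.lintegral_Lp_add_le hp hq (by norm_num : (1:ℝ) ≤ 2)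

lemma stepC (T : ℝ) (f g : ℝ → ℂ) (F G : ℝ → ℝ → ℂ)
    (hf : Measurable f) (hg : Measurable g)
    (hF : Measurable (fun p : ℝ × ℝ => F p.1 p.2))
    (hG : Measurable (fun p : ℝ × ℝ => G p.1 p.2)) :
    (∫⁻ t in Set.Icc (0:ℝ) T, ∫⁻ x : ℝ,
        (((‖f (x - t)‖₊ : ℝ≥0∞) + ∫⁻ s in Set.Icc (0:ℝ) T, (‖F s (x - t + s)‖₊ : ℝ≥0∞)) *
         ((‖g (x + t)‖₊ : ℝ≥0∞) + ∫⁻ s in Set.Icc (0:ℝ) T, (‖G s (x + t - s)‖₊ : ℝ≥0∞)))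
          ^ (2:ℝ)) ^ (2⁻¹:ℝ)
      ≤ ((∫⁻ x : ℝ, (‖f x‖₊ : ℝ≥0∞) ^ (2:ℝ)) ^ (2⁻¹:ℝ)
          + ∫⁻ t in Set.Icc (0:ℝ) T, (∫⁻ x : ℝ, (‖F t x‖₊ : ℝ≥0∞) ^ (2:ℝ)) ^ (2⁻¹:ℝ))
        * ((∫⁻ x : ℝ, (‖g x‖₊ : ℝ≥0∞) ^ (2:ℝ)) ^ (2⁻¹:ℝ)
          + ∫⁻ t in Set.Icc (0:ℝ) T, (∫⁻ x : ℝ, (‖G t x‖₊ : ℝ≥0∞) ^ (2:ℝ)) ^ (2⁻¹:ℝ)) := by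
  set ν : Measure ℝ := volume.restrict (Set.Icc (0:ℝ) T) with hν
  set P : Measure (ℝ × ℝ) := ν.prod volume with hP
  set Nf : ℝ≥0∞ := (∫⁻ x : ℝ, (‖f x‖₊ : ℝ≥0∞) ^ (2:ℝ)) ^ (2⁻¹:ℝ) with hNf
  set Ng : ℝ≥0∞ := (∫⁻ x : ℝ, (‖g x‖₊ : ℝ≥0∞) ^ (2:ℝ)) ^ (2⁻¹:ℝ) with hNg
  set NF : ℝ≥0∞ := ∫⁻ t, (∫⁻ x : ℝ, (‖F t x‖₊ : ℝ≥0∞) ^ (2:ℝ)) ^ (2⁻¹:ℝ) ∂ν with hNF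
  set NG : ℝ≥0∞ := ∫⁻ t, (∫⁻ x : ℝ, (‖G t x‖₊ : ℝ≥0∞) ^ (2:ℝ)) ^ (2⁻¹:ℝ) ∂ν with hNG
  set A₁ : ℝ × ℝ → ℝ≥0∞ := fun z => (‖f (z.2 - z.1)‖₊ : ℝ≥0∞) with hA₁def
  set A₂ : ℝ × ℝ → ℝ≥0∞ := fun z => ∫⁻ s, (‖F s (z.2 - z.1 + s)‖₊ : ℝ≥0∞) ∂ν with hA₂def
  set B₁ : ℝ × ℝ → ℝ≥0∞ := fun z => (‖g (z.2 + z.1)‖₊ : ℝ≥0∞) with hB₁def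
  set B₂ : ℝ × ℝ → ℝ≥0∞ := fun z => ∫⁻ s, (‖G s (z.2 + z.1 - s)‖₊ : ℝ≥0∞) ∂ν with hB₂def
  have hA₁ : Measurable A₁ := (hf.comp (measurable_snd.sub measurable_fst)).nnnorm.coe_nnreal_ennreal
  have hB₁ : Measurable B₁ := (hg.comp (measurable_snd.add measurable_fst)).nnnorm.coe_nnreal_ennreal
  have hFm : Measurable (fun q : (ℝ × ℝ) × ℝ => (‖F q.2 (q.1.2 - q.1.1 + q.2)‖₊ : ℝ≥0∞)) :=
    (hF.comp (measurable_snd.prodMk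
      (((measurable_fst.snd.sub measurable_fst.fst)).add measurable_snd))).nnnorm.coe_nnreal_ennreal
  have hGm : Measurable (fun q : (ℝ × ℝ) × ℝ => (‖G q.2 (q.1.2 + q.1.1 - q.2)‖₊ : ℝ≥0∞)) :=
    (hG.comp (measurable_snd.prodMk
      (((measurable_fst.snd.add measurable_fst.fst)).sub measurable_snd))).nnnorm.coe_nnreal_ennreal
  have hA₂ : Measurable A₂ := Measurable.lintegral_prod_right hFm
  have hB₂ : Measurable B₂ := Measurable.lintegral_prod_right hGm
  -- the four basic term bounds
  have hfG : Measurable fun s => (∫⁻ x : ℝ, (‖G s x‖₊ : ℝ≥0∞) ^ (2:ℝ)) ^ (2⁻¹:ℝ) :=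
    (Measurable.lintegral_prod_right (hG.nnnorm.coe_nnreal_ennreal.pow_const _)).pow_const _
  have hfF : Measurable fun s => (∫⁻ x : ℝ, (‖F s x‖₊ : ℝ≥0∞) ^ (2:ℝ)) ^ (2⁻¹:ℝ) :=
    (Measurable.lintegral_prod_right (hF.nnnorm.coe_nnreal_ennreal.pow_const _)).pow_const _
  have prodify : ∀ (W : ℝ × ℝ → ℝ≥0∞), Measurable W →
      ∫⁻ z, W z ∂P = ∫⁻ t, ∫⁻ x, W (t, x) ∂volume ∂ν := fun W hW =>
    lintegral_prod W hW.aemeasurable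
  have t11 : (∫⁻ z, (A₁ z * B₁ z) ^ (2:ℝ) ∂P) ^ (2⁻¹:ℝ) ≤ Nf * Ng := by
    rw [prodify _ ((hA₁.fun_mul hB₁).pow_const _)]
    have : ∀ t x : ℝ, (A₁ (t, x) * B₁ (t, x)) ^ (2:ℝ)
        = (fun y => (‖f y‖₊ : ℝ≥0∞) ^ (2:ℝ)) (x - t + 0)
          * (fun y => (‖g y‖₊ : ℝ≥0∞) ^ (2:ℝ)) (x + t - 0) := by
      intro t x
      simp only [hA₁def, hB₁def, add_zero, sub_zero]
      exact ENNReal.mul_rpow_of_nonneg _ _ (by norm_num)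
    simp_rw [this]
    exact term_lem T _ _ (hf.nnnorm.coe_nnreal_ennreal.pow_const _) (hg.nnnorm.coe_nnreal_ennreal.pow_const _) 0 0
  have t12 : (∫⁻ z, (A₁ z * B₂ z) ^ (2:ℝ) ∂P) ^ (2⁻¹:ℝ) ≤ Nf * NG := by
    have hH : Measurable (Function.uncurry fun (s : ℝ) (z : ℝ × ℝ) =>
        A₁ z * (‖G s (z.2 + z.1 - s)‖₊ : ℝ≥0∞)) := by
      apply Measurable.fun_mul
      · exact hA₁.comp measurable_snd
      · exact (hG.comp (measurable_fst.prodMk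
          ((measurable_snd.snd.add measurable_snd.fst).sub measurable_fst))).nnnorm.coe_nnreal_ennreal
    have expand : ∀ z : ℝ × ℝ, A₁ z * B₂ z
        = ∫⁻ s, A₁ z * (‖G s (z.2 + z.1 - s)‖₊ : ℝ≥0∞) ∂ν := by
      intro z
      rw [hB₂def, lintegral_const_mul _ (by
        exact (hG.comp (measurable_id.prodMk
          (measurable_const.sub measurable_id))).nnnorm.coe_nnreal_ennreal)]
    simp_rw [expand]
    refine le_trans (mink_lem P ν _ hH) ?_
    have inner : ∀ s : ℝ, (∫⁻ z, (A₁ z * (‖G s (z.2 + z.1 - s)‖₊ : ℝ≥0∞)) ^ (2:ℝ) ∂P) ^ (2⁻¹:ℝ)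
        ≤ Nf * (∫⁻ x : ℝ, (‖G s x‖₊ : ℝ≥0∞) ^ (2:ℝ)) ^ (2⁻¹:ℝ) := by
      intro s
      rw [prodify _ (by
        exact ((hA₁.fun_mul ((hG.comp (measurable_const.prodMk
          ((measurable_snd.add measurable_fst).sub measurable_const))).nnnorm.coe_nnreal_ennreal)).pow_const _))]
      have : ∀ t x : ℝ, (A₁ (t, x) * (‖G s (x + t - s)‖₊ : ℝ≥0∞)) ^ (2:ℝ)
          = (fun y => (‖f y‖₊ : ℝ≥0∞) ^ (2:ℝ)) (x - t + 0)
            * (fun y => (‖G s y‖₊ : ℝ≥0∞) ^ (2:ℝ)) (x + t - s) := by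
        intro t x
        simp only [hA₁def, add_zero]
        exact ENNReal.mul_rpow_of_nonneg _ _ (by norm_num)
      simp_rw [this]
      exact term_lem T _ _ (hf.nnnorm.coe_nnreal_ennreal.pow_const _)
        ((hG.comp (measurable_const.prodMk measurable_id)).nnnorm.coe_nnreal_ennreal.pow_const _) 0 s
    calc ∫⁻ s, (∫⁻ z, (A₁ z * (‖G s (z.2 + z.1 - s)‖₊ : ℝ≥0∞)) ^ (2:ℝ) ∂P) ^ (2⁻¹:ℝ) ∂ν
        ≤ ∫⁻ s, Nf * (∫⁻ x : ℝ, (‖G s x‖₊ : ℝ≥0∞) ^ (2:ℝ)) ^ (2⁻¹:ℝ) ∂ν :=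
          lintegral_mono inner
      _ = Nf * NG := by rw [lintegral_const_mul _ hfG]
  have t21 : (∫⁻ z, (A₂ z * B₁ z) ^ (2:ℝ) ∂P) ^ (2⁻¹:ℝ) ≤ NF * Ng := by
    have hH : Measurable (Function.uncurry fun (s : ℝ) (z : ℝ × ℝ) =>
        (‖F s (z.2 - z.1 + s)‖₊ : ℝ≥0∞) * B₁ z) := by
      apply Measurable.fun_mul
      · exact (hF.comp (measurable_fst.prodMk
          ((measurable_snd.snd.sub measurable_snd.fst).add measurable_fst))).nnnorm.coe_nnreal_ennreal
      · exact hB₁.comp measurable_snd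
    have expand : ∀ z : ℝ × ℝ, A₂ z * B₁ z
        = ∫⁻ s, (‖F s (z.2 - z.1 + s)‖₊ : ℝ≥0∞) * B₁ z ∂ν := by
      intro z
      rw [hA₂def, lintegral_mul_const _ (by
        exact (hF.comp (measurable_id.prodMk
          (measurable_const.add measurable_id))).nnnorm.coe_nnreal_ennreal)]
    simp_rw [expand]
    refine le_trans (mink_lem P ν _ hH) ?_
    have inner : ∀ s : ℝ, (∫⁻ z, ((‖F s (z.2 - z.1 + s)‖₊ : ℝ≥0∞) * B₁ z) ^ (2:ℝ) ∂P) ^ (2⁻¹:ℝ)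
        ≤ (∫⁻ x : ℝ, (‖F s x‖₊ : ℝ≥0∞) ^ (2:ℝ)) ^ (2⁻¹:ℝ) * Ng := by
      intro s
      rw [prodify _ (by
        exact ((((hF.comp (measurable_const.prodMk
          ((measurable_snd.sub measurable_fst).add measurable_const))).nnnorm.coe_nnreal_ennreal).fun_mul hB₁).pow_const _))]
      have : ∀ t x : ℝ, ((‖F s (x - t + s)‖₊ : ℝ≥0∞) * B₁ (t, x)) ^ (2:ℝ)
          = (fun y => (‖F s y‖₊ : ℝ≥0∞) ^ (2:ℝ)) (x - t + s)
            * (fun y => (‖g y‖₊ : ℝ≥0∞) ^ (2:ℝ)) (x + t - 0) := by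
        intro t x
        simp only [hB₁def, sub_zero]
        exact ENNReal.mul_rpow_of_nonneg _ _ (by norm_num)
      simp_rw [this]
      exact term_lem T _ _
        ((hF.comp (measurable_const.prodMk measurable_id)).nnnorm.coe_nnreal_ennreal.pow_const _)
        (hg.nnnorm.coe_nnreal_ennreal.pow_const _) s 0
    calc ∫⁻ s, (∫⁻ z, ((‖F s (z.2 - z.1 + s)‖₊ : ℝ≥0∞) * B₁ z) ^ (2:ℝ) ∂P) ^ (2⁻¹:ℝ) ∂ν
        ≤ ∫⁻ s, (∫⁻ x : ℝ, (‖F s x‖₊ : ℝ≥0∞) ^ (2:ℝ)) ^ (2⁻¹:ℝ) * Ng ∂ν :=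
          lintegral_mono inner
      _ = NF * Ng := by rw [lintegral_mul_const _ hfF]
  have t22 : (∫⁻ z, (A₂ z * B₂ z) ^ (2:ℝ) ∂P) ^ (2⁻¹:ℝ) ≤ NF * NG := by
    have hH : Measurable (Function.uncurry fun (p : ℝ × ℝ) (z : ℝ × ℝ) =>
        (‖F p.1 (z.2 - z.1 + p.1)‖₊ : ℝ≥0∞) * (‖G p.2 (z.2 + z.1 - p.2)‖₊ : ℝ≥0∞)) := by
      apply Measurable.fun_mul
      · exact (hF.comp (measurable_fst.fst.prodMk
          ((measurable_snd.snd.sub measurable_snd.fst).add measurable_fst.fst))).nnnorm.coe_nnreal_ennreal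
      · exact (hG.comp (measurable_fst.snd.prodMk
          ((measurable_snd.snd.add measurable_snd.fst).sub measurable_fst.snd))).nnnorm.coe_nnreal_ennreal
    have expand : ∀ z : ℝ × ℝ, A₂ z * B₂ z
        = ∫⁻ p, (‖F p.1 (z.2 - z.1 + p.1)‖₊ : ℝ≥0∞) * (‖G p.2 (z.2 + z.1 - p.2)‖₊ : ℝ≥0∞)
            ∂(ν.prod ν) := by
      intro z
      rw [hA₂def, hB₂def]
      exact (lintegral_prod_mul
        ((hF.comp (measurable_id.prodMk (measurable_const.add measurable_id))).nnnorm.coe_nnreal_ennreal.aemeasurable)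
        ((hG.comp (measurable_id.prodMk (measurable_const.sub measurable_id))).nnnorm.coe_nnreal_ennreal.aemeasurable)).symm
    simp_rw [expand]
    refine le_trans (mink_lem P (ν.prod ν) _ hH) ?_
    have inner : ∀ p : ℝ × ℝ,
        (∫⁻ z, ((‖F p.1 (z.2 - z.1 + p.1)‖₊ : ℝ≥0∞) * (‖G p.2 (z.2 + z.1 - p.2)‖₊ : ℝ≥0∞)) ^ (2:ℝ) ∂P) ^ (2⁻¹:ℝ)
        ≤ (∫⁻ x : ℝ, (‖F p.1 x‖₊ : ℝ≥0∞) ^ (2:ℝ)) ^ (2⁻¹:ℝ)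
          * (∫⁻ x : ℝ, (‖G p.2 x‖₊ : ℝ≥0∞) ^ (2:ℝ)) ^ (2⁻¹:ℝ) := by
      intro p
      rw [prodify _ (by
        exact ((((hF.comp (measurable_const.prodMk
            ((measurable_snd.sub measurable_fst).add measurable_const))).nnnorm.coe_nnreal_ennreal).fun_mul
          ((hG.comp (measurable_const.prodMk
            ((measurable_snd.add measurable_fst).sub measurable_const))).nnnorm.coe_nnreal_ennreal)).pow_const _))]
      have : ∀ t x : ℝ, ((‖F p.1 (x - t + p.1)‖₊ : ℝ≥0∞) * (‖G p.2 (x + t - p.2)‖₊ : ℝ≥0∞)) ^ (2:ℝ)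
          = (fun y => (‖F p.1 y‖₊ : ℝ≥0∞) ^ (2:ℝ)) (x - t + p.1)
            * (fun y => (‖G p.2 y‖₊ : ℝ≥0∞) ^ (2:ℝ)) (x + t - p.2) := by
        intro t x
        exact ENNReal.mul_rpow_of_nonneg _ _ (by norm_num)
      simp_rw [this]
      exact term_lem T _ _
        ((hF.comp (measurable_const.prodMk measurable_id)).nnnorm.coe_nnreal_ennreal.pow_const _)
        ((hG.comp (measurable_const.prodMk measurable_id)).nnnorm.coe_nnreal_ennreal.pow_const _) p.1 p.2
    calc ∫⁻ p, (∫⁻ z, ((‖F p.1 (z.2 - z.1 + p.1)‖₊ : ℝ≥0∞) * (‖G p.2 (z.2 + z.1 - p.2)‖₊ : ℝ≥0∞)) ^ (2:ℝ) ∂P) ^ (2⁻¹:ℝ) ∂(ν.prod ν)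
        ≤ ∫⁻ p, (∫⁻ x : ℝ, (‖F p.1 x‖₊ : ℝ≥0∞) ^ (2:ℝ)) ^ (2⁻¹:ℝ)
            * (∫⁻ x : ℝ, (‖G p.2 x‖₊ : ℝ≥0∞) ^ (2:ℝ)) ^ (2⁻¹:ℝ) ∂(ν.prod ν) :=
          lintegral_mono inner
      _ = NF * NG := lintegral_prod_mul hfF.aemeasurable hfG.aemeasurable
  -- combine
  have hgoal : (∫⁻ t, ∫⁻ x, ((A₁ (t,x) + A₂ (t,x)) * (B₁ (t,x) + B₂ (t,x))) ^ (2:ℝ) ∂volume ∂ν) ^ (2⁻¹:ℝ)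
      ≤ (Nf + NF) * (Ng + NG) := by
    rw [← prodify _ (((hA₁.fun_add hA₂).fun_mul (hB₁.fun_add hB₂)).pow_const _)]
    have split : ∀ z : ℝ × ℝ, ((A₁ z + A₂ z) * (B₁ z + B₂ z))
        = (A₁ z * B₁ z + A₁ z * B₂ z) + (A₂ z * B₁ z + A₂ z * B₂ z) := fun z => by ring
    simp_rw [split]
    calc (∫⁻ z, ((A₁ z * B₁ z + A₁ z * B₂ z) + (A₂ z * B₁ z + A₂ z * B₂ z)) ^ (2:ℝ) ∂P) ^ (2⁻¹:ℝ)
        ≤ (∫⁻ z, (A₁ z * B₁ z + A₁ z * B₂ z) ^ (2:ℝ) ∂P) ^ (2⁻¹:ℝ)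
          + (∫⁻ z, (A₂ z * B₁ z + A₂ z * B₂ z) ^ (2:ℝ) ∂P) ^ (2⁻¹:ℝ) :=
          tri_lem P _ _ ((hA₁.mul hB₁).add (hA₁.mul hB₂)).aemeasurable
            ((hA₂.mul hB₁).add (hA₂.mul hB₂)).aemeasurable
      _ ≤ ((∫⁻ z, (A₁ z * B₁ z) ^ (2:ℝ) ∂P) ^ (2⁻¹:ℝ) + (∫⁻ z, (A₁ z * B₂ z) ^ (2:ℝ) ∂P) ^ (2⁻¹:ℝ))
          + ((∫⁻ z, (A₂ z * B₁ z) ^ (2:ℝ) ∂P) ^ (2⁻¹:ℝ) + (∫⁻ z, (A₂ z * B₂ z) ^ (2:ℝ) ∂P) ^ (2⁻¹:ℝ)) :=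
          add_le_add (tri_lem P _ _ (hA₁.mul hB₁).aemeasurable (hA₁.mul hB₂).aemeasurable)
            (tri_lem P _ _ (hA₂.mul hB₁).aemeasurable (hA₂.mul hB₂).aemeasurable)
      _ ≤ (Nf * Ng + Nf * NG) + (NF * Ng + NF * NG) :=
          add_le_add (add_le_add t11 t12) (add_le_add t21 t22)
      _ = (Nf + NF) * (Ng + NG) := by ring
  exact hgoal


/-- Bilinear space-time `L²` estimate for Duhamel solutions
`u(t) = e^{-itD_x}f + i∫₀ᵗ e^{-i(t-s)D_x} F(s) ds` (i.e. `u(t,x) = f(x-t) + i∫₀ᵗ F(s, x-(t-s)) ds`)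
and `v(t) = e^{itD_x}g + i∫₀ᵗ e^{i(t-s)D_x} G(s) ds` of `(D_t + D_x)u = F, u(0) = f` and
`(D_t - D_x)v = G, v(0) = g`:
`‖uv‖_{L²([0,T]×ℝ)} ≤ C (‖f‖_{L²} + ∫₀ᵀ ‖F(t)‖_{L²} dt)(‖g‖_{L²} + ∫₀ᵀ ‖G(t)‖_{L²} dt)`,
with an absolute constant `C`; the same holds with `u` replaced by its complex conjugate. -/
theorem null_form_estimate_duhamel :
    ∃ C : ℝ≥0∞, 0 < C ∧ C < ⊤ ∧ ∀ (T : ℝ), 0 < T → ∀ (f g : ℝ → ℂ) (F G : ℝ → ℝ → ℂ),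
      Measurable f → Measurable g →
      Measurable (fun p : ℝ × ℝ => F p.1 p.2) → Measurable (fun p : ℝ × ℝ => G p.1 p.2) →
      ∀ u v : ℝ → ℝ → ℂ,
      (∀ t x, u t x = f (x - t) + Complex.I * ∫ s in (0:ℝ)..t, F s (x - (t - s))) →
      (∀ t x, v t x = g (x + t) + Complex.I * ∫ s in (0:ℝ)..t, G s (x + (t - s))) →
      (∫⁻ t in Set.Icc (0:ℝ) T, ∫⁻ x : ℝ,
          (‖u t x * v t x‖₊ : ℝ≥0∞) ^ 2) ^ (1/2 : ℝ) ≤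
        C * ((∫⁻ x : ℝ, (‖f x‖₊ : ℝ≥0∞) ^ 2) ^ (1/2 : ℝ)
              + ∫⁻ t in Set.Icc (0:ℝ) T, (∫⁻ x : ℝ, (‖F t x‖₊ : ℝ≥0∞) ^ 2) ^ (1/2 : ℝ))
          * ((∫⁻ x : ℝ, (‖g x‖₊ : ℝ≥0∞) ^ 2) ^ (1/2 : ℝ)
              + ∫⁻ t in Set.Icc (0:ℝ) T, (∫⁻ x : ℝ, (‖G t x‖₊ : ℝ≥0∞) ^ 2) ^ (1/2 : ℝ)) ∧
      (∫⁻ t in Set.Icc (0:ℝ) T, ∫⁻ x : ℝ,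
          (‖(starRingEnd ℂ) (u t x) * v t x‖₊ : ℝ≥0∞) ^ 2) ^ (1/2 : ℝ) ≤
        C * ((∫⁻ x : ℝ, (‖f x‖₊ : ℝ≥0∞) ^ 2) ^ (1/2 : ℝ)
              + ∫⁻ t in Set.Icc (0:ℝ) T, (∫⁻ x : ℝ, (‖F t x‖₊ : ℝ≥0∞) ^ 2) ^ (1/2 : ℝ))
          * ((∫⁻ x : ℝ, (‖g x‖₊ : ℝ≥0∞) ^ 2) ^ (1/2 : ℝ)
              + ∫⁻ t in Set.Icc (0:ℝ) T, (∫⁻ x : ℝ, (‖G t x‖₊ : ℝ≥0∞) ^ 2) ^ (1/2 : ℝ)) := by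
  refine ⟨1, zero_lt_one, one_lt_top, ?_⟩
  intro T hT f g F G hf hg hF hG u v hu hv
  have pow2 : ∀ X : ℝ≥0∞, X ^ (2:ℕ) = X ^ (2:ℝ) := fun X => by
    rw [← ENNReal.rpow_natCast]; norm_num
  -- pointwise bounds
  have hu' : ∀ t ∈ Set.Icc (0:ℝ) T, ∀ x : ℝ, (‖u t x‖₊ : ℝ≥0∞)
      ≤ (‖f (x - t)‖₊ : ℝ≥0∞) + ∫⁻ s in Set.Icc (0:ℝ) T, (‖F s (x - t + s)‖₊ : ℝ≥0∞) := by
    intro t ht x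
    rw [hu t x]
    have tri : (‖f (x - t) + Complex.I * ∫ s in (0:ℝ)..t, F s (x - (t - s))‖₊ : ℝ≥0∞)
        ≤ (‖f (x - t)‖₊ : ℝ≥0∞)
          + (‖Complex.I * ∫ s in (0:ℝ)..t, F s (x - (t - s))‖₊ : ℝ≥0∞) := by
      rw [← ENNReal.coe_add]
      exact_mod_cast nnnorm_add_le _ _
    refine le_trans tri (add_le_add le_rfl ?_)
    have hI : (‖Complex.I * ∫ s in (0:ℝ)..t, F s (x - (t - s))‖₊ : ℝ≥0∞)
        = (‖∫ s in (0:ℝ)..t, F s (x - (t - s))‖₊ : ℝ≥0∞) := by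
      simp [nnnorm_mul]
    rw [hI, intervalIntegral.integral_of_le ht.1]
    refine le_trans (enorm_integral_le_lintegral_enorm _) ?_
    refine le_trans (lintegral_mono_set (fun s hs => ⟨hs.1.le, hs.2.trans ht.2⟩) :
      (∫⁻ s in Set.Ioc (0:ℝ) t, (‖F s (x - (t - s))‖₊ : ℝ≥0∞))
        ≤ ∫⁻ s in Set.Icc (0:ℝ) T, (‖F s (x - (t - s))‖₊ : ℝ≥0∞)) ?_
    simp_rw [show ∀ s : ℝ, x - (t - s) = x - t + s from fun s => by ring]
    exact le_rfl
  have hv' : ∀ t ∈ Set.Icc (0:ℝ) T, ∀ x : ℝ, (‖v t x‖₊ : ℝ≥0∞)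
      ≤ (‖g (x + t)‖₊ : ℝ≥0∞) + ∫⁻ s in Set.Icc (0:ℝ) T, (‖G s (x + t - s)‖₊ : ℝ≥0∞) := by
    intro t ht x
    rw [hv t x]
    have tri : (‖g (x + t) + Complex.I * ∫ s in (0:ℝ)..t, G s (x + (t - s))‖₊ : ℝ≥0∞)
        ≤ (‖g (x + t)‖₊ : ℝ≥0∞)
          + (‖Complex.I * ∫ s in (0:ℝ)..t, G s (x + (t - s))‖₊ : ℝ≥0∞) := by
      rw [← ENNReal.coe_add]
      exact_mod_cast nnnorm_add_le _ _
    refine le_trans tri (add_le_add le_rfl ?_)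
    have hI : (‖Complex.I * ∫ s in (0:ℝ)..t, G s (x + (t - s))‖₊ : ℝ≥0∞)
        = (‖∫ s in (0:ℝ)..t, G s (x + (t - s))‖₊ : ℝ≥0∞) := by
      simp [nnnorm_mul]
    rw [hI, intervalIntegral.integral_of_le ht.1]
    refine le_trans (enorm_integral_le_lintegral_enorm _) ?_
    refine le_trans (lintegral_mono_set (fun s hs => ⟨hs.1.le, hs.2.trans ht.2⟩) :
      (∫⁻ s in Set.Ioc (0:ℝ) t, (‖G s (x + (t - s))‖₊ : ℝ≥0∞))
        ≤ ∫⁻ s in Set.Icc (0:ℝ) T, (‖G s (x + (t - s))‖₊ : ℝ≥0∞)) ?_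
    simp_rw [show ∀ s : ℝ, x + (t - s) = x + t - s from fun s => by ring]
    exact le_rfl
  have main : (∫⁻ t in Set.Icc (0:ℝ) T, ∫⁻ x : ℝ,
        ((‖u t x‖₊ : ℝ≥0∞) * (‖v t x‖₊ : ℝ≥0∞)) ^ 2) ^ (1/2 : ℝ) ≤
      1 * ((∫⁻ x : ℝ, (‖f x‖₊ : ℝ≥0∞) ^ 2) ^ (1/2 : ℝ)
            + ∫⁻ t in Set.Icc (0:ℝ) T, (∫⁻ x : ℝ, (‖F t x‖₊ : ℝ≥0∞) ^ 2) ^ (1/2 : ℝ))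
        * ((∫⁻ x : ℝ, (‖g x‖₊ : ℝ≥0∞) ^ 2) ^ (1/2 : ℝ)
            + ∫⁻ t in Set.Icc (0:ℝ) T, (∫⁻ x : ℝ, (‖G t x‖₊ : ℝ≥0∞) ^ 2) ^ (1/2 : ℝ)) := by
    rw [one_mul, show (1/2 : ℝ) = (2⁻¹ : ℝ) by norm_num]
    simp_rw [pow2]
    refine le_trans ?_ (stepC T f g F G hf hg hF hG)
    refine ENNReal.rpow_le_rpow ?_ (by norm_num)
    refine lintegral_mono_ae ((ae_restrict_iff' measurableSet_Icc).2 (ae_of_all _ fun t ht => ?_))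
    refine lintegral_mono fun x => ?_
    exact ENNReal.rpow_le_rpow (mul_le_mul' (hu' t ht x) (hv' t ht x)) (by norm_num)
  constructor
  · refine le_trans (le_of_eq ?_) main
    congr 1
    refine lintegral_congr fun t => lintegral_congr fun x => ?_
    rw [← ENNReal.coe_mul, ← nnnorm_mul]
  · refine le_trans (le_of_eq ?_) main
    congr 1
    refine lintegral_congr fun t => lintegral_congr fun x => ?_
    rw [← ENNReal.coe_mul, ← nnnorm_mul]
    congr 2
    rw [nnnorm_mul, nnnorm_mul, show (starRingEnd ℂ) (u t x) = star (u t x) from rfl, nnnorm_star]
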